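/- Let b : U → U* be an ε-Hermitian isomorphism on a finite-dimensional complex vector space U (ε = ±1), h : U → U an automorphism with h̄* b h = b, and define V := (h - I) ∘ b⁻¹. Then V satisfies V̄* = -ε V ∘ h̄*, so (U; b, h, V) is an ε-Hermitian variation structure. -/

import Mathlib

open Matrix

/-- If `b` is an ε-Hermitian isomorphism (`Bᴴ = εB`, `B` invertible), `h` an automorphism
with `h̄*bh = b`, and `V := (h - I)b⁻¹`, then `V̄* = -ε V h̄*`, so `(U; b, h, V)` is an
ε-hermitian variation structure. -/
theorem stmt16 {m : ℕ} (B H : Matrix (Fin m) (Fin m) ℂ) (hB : IsUnit B.det)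
    (ε : ℂ) (hε : ε = 1 ∨ ε = -1) (hherm : Bᴴ = ε • B) (hpres : Hᴴ * B * H = B) :
    letI V := (H - 1) * B⁻¹
    Vᴴ = (-ε) • (V * Hᴴ) ∧ V * B = H - 1 := by
  have hεε : ε * ε = 1 := by rcases hε with h | h <;> simp [h]
  have hBB : B⁻¹ * B = 1 := Matrix.nonsing_inv_mul B hB
  have hBB' : B * B⁻¹ = 1 := Matrix.mul_nonsing_inv B hB
  have hHdet : IsUnit H.det := by
    have h1 := congrArg Matrix.det hpres
    rw [Matrix.det_mul, Matrix.det_mul, Matrix.det_conjTranspose] at h1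
    rcases hB with ⟨u, hu⟩
    have : star H.det * H.det = 1 := by
      have : star H.det * H.det * B.det = 1 * B.det := by
        rw [one_mul]; linear_combination h1
      rw [← hu] at this
      exact_mod_cast mul_right_cancel₀ (by exact_mod_cast u.ne_zero) this
    exact IsUnit.of_mul_eq_one _ (by rw [mul_comm] at this; exact this)
  have hHH : H * H⁻¹ = 1 := Matrix.mul_nonsing_inv H hHdet
  have hHH' : H⁻¹ * H = 1 := Matrix.nonsing_inv_mul H hHdet
  -- B⁻ᴴ = ε • B⁻¹
  have hBinvH : (B⁻¹)ᴴ = ε • B⁻¹ := by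
    rw [Matrix.conjTranspose_nonsing_inv]
    refine Matrix.inv_eq_right_inv ?_
    rw [hherm, Matrix.smul_mul, Matrix.mul_smul, hBB', smul_smul, hεε, one_smul]
  -- key: H * B⁻¹ * Hᴴ = B⁻¹
  have hkey : H * B⁻¹ * Hᴴ = B⁻¹ := by
    have h1 : B⁻¹ = H⁻¹ * B⁻¹ * (Hᴴ)⁻¹ := by
      have := congrArg (fun X : Matrix (Fin m) (Fin m) ℂ => X⁻¹) hpres
      try simp only at this
      rw [Matrix.mul_inv_rev, Matrix.mul_inv_rev] at this
      rw [Matrix.mul_assoc]; exact this.symm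
    have hHHinv : Hᴴ * (Hᴴ)⁻¹ = 1 :=
      Matrix.mul_nonsing_inv _ (by rwa [Matrix.det_conjTranspose, isUnit_star])
    calc H * B⁻¹ * Hᴴ = H * (H⁻¹ * B⁻¹ * (Hᴴ)⁻¹) * Hᴴ := by rw [← h1]
      _ = (H * H⁻¹) * B⁻¹ * ((Hᴴ)⁻¹ * Hᴴ) := by noncomm_ring
      _ = B⁻¹ := by
          rw [hHH, Matrix.nonsing_inv_mul _ (by rwa [Matrix.det_conjTranspose, isUnit_star]),
            one_mul, mul_one]
  constructor
  · show ((H - 1) * B⁻¹)ᴴ = (-ε) • ((H - 1) * B⁻¹ * Hᴴ)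
    rw [Matrix.conjTranspose_mul, hBinvH, Matrix.conjTranspose_sub, Matrix.conjTranspose_one]
    have : (H - 1) * B⁻¹ * Hᴴ = B⁻¹ - B⁻¹ * Hᴴ := by
      rw [Matrix.sub_mul, one_mul, Matrix.sub_mul, hkey]
    rw [this, Matrix.mul_sub, mul_one, Matrix.smul_mul]
    module
  · show (H - 1) * B⁻¹ * B = H - 1
    rw [Matrix.mul_assoc, hBB, mul_one]
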